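/- Let G1 and G2 be cosimple, loopless, 2-edge-connected graphs on a common edge set with exactly three vertices each, with L(G1) = L(G2) and L(G1) having at least two circuits. If G1 has two parallel classes each of size at least three, then G1 and G2 are 2-isomorphic. -/

import Mathlib

open Finset

/-- A multigraph with vertex type `V`, edge-label type `α`, edge set `E`,
and an endpoints function assigning to each edge an unordered pair of vertices. -/
structure MGraph (V : Type) (α : Type) where
  E : Finset α
  ends : α → Sym2 V

namespace MGraph

variable {V V₁ V₂ : Type} {α : Type} [DecidableEq V] [DecidableEq V₁] [DecidableEq V₂]
  [DecidableEq α]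

/-- `u` and `v` are joined by an edge of `X`. -/
def Adj (G : MGraph V α) (X : Finset α) (u v : V) : Prop :=
  ∃ e ∈ X, G.ends e = s(u, v)

/-- `v` is incident with an edge of `X`. -/
def VIn (G : MGraph V α) (X : Finset α) (v : V) : Prop :=
  ∃ e ∈ X, v ∈ G.ends e

/-- The degree of `v` in the edge set `X` (loops count twice). -/
def degIn (G : MGraph V α) (X : Finset α) (v : V) : ℕ :=
  ∑ e ∈ X, (if G.ends e = s(v, v) then 2 else if v ∈ G.ends e then 1 else 0)

/-- `C` is the edge set of a cycle of `G`: a nonempty connected 2-regular subgraph. -/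
def IsCycle (G : MGraph V α) (C : Finset α) : Prop :=
  C.Nonempty ∧ C ⊆ G.E ∧ (∀ v, G.VIn C v → G.degIn C v = 2) ∧
    ∀ u v, G.VIn C u → G.VIn C v → Relation.ReflTransGen (G.Adj C) u v

/-- The subgraph on edge set `X` contains at least two (distinct) cycles. -/
def TwoCycles (G : MGraph V α) (X : Finset α) : Prop :=
  ∃ C₁ C₂ : Finset α, G.IsCycle C₁ ∧ G.IsCycle C₂ ∧ C₁ ⊆ X ∧ C₂ ⊆ X ∧ C₁ ≠ C₂

/-- `X` is a circuit of the bicircular lift matroid `L(G)`: a minimal edge set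
containing at least two cycles. -/
def LiftCircuit (G : MGraph V α) (X : Finset α) : Prop :=
  X ⊆ G.E ∧ G.TwoCycles X ∧ ∀ Y ⊂ X, ¬ G.TwoCycles Y

/-- `X` is independent in the bicircular lift matroid `L(G)`. -/
def LiftIndep (G : MGraph V α) (X : Finset α) : Prop :=
  X ⊆ G.E ∧ ∀ C ⊆ X, ¬ G.LiftCircuit C

/-- `L(G)` has at least two circuits. -/
def TwoLiftCircuits (G : MGraph V α) : Prop :=
  ∃ X Y : Finset α, G.LiftCircuit X ∧ G.LiftCircuit Y ∧ X ≠ Y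

/-- Equality of the bicircular lift matroids `L(G₁) = L(G₂)` (equal ground sets
and equal circuit collections). -/
def LiftEq (G₁ : MGraph V₁ α) (G₂ : MGraph V₂ α) : Prop :=
  G₁.E = G₂.E ∧ ∀ X : Finset α, G₁.LiftCircuit X ↔ G₂.LiftCircuit X

/-- `G₁` and `G₂` are 2-isomorphic, i.e. their graphic matroids on the common
edge set are equal (equivalently, they have the same cycles). -/
def TwoIso (G₁ : MGraph V₁ α) (G₂ : MGraph V₂ α) : Prop :=
  G₁.E = G₂.E ∧ ∀ X : Finset α, G₁.IsCycle X ↔ G₂.IsCycle X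

/-- `G` has no loops. -/
def Loopless (G : MGraph V α) : Prop := ∀ e ∈ G.E, ¬ (G.ends e).IsDiag

/-- `G` is connected. -/
def Connected (G : MGraph V α) : Prop :=
  ∀ u v : V, Relation.ReflTransGen (G.Adj G.E) u v

/-- `G` is 2-edge-connected: every edge lies in a cycle. -/
def TwoEdgeConnected (G : MGraph V α) : Prop :=
  ∀ e ∈ G.E, ∃ C : Finset α, G.IsCycle C ∧ e ∈ C

/-- `e` is a cut-edge of `G`: an edge contained in no cycle. -/
def IsCutEdge (G : MGraph V α) (e : α) : Prop :=
  e ∈ G.E ∧ ∀ C : Finset α, G.IsCycle C → e ∉ C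

/-- Deletion of the edge `e` from `G`. -/
def delete (G : MGraph V α) (e : α) : MGraph V α :=
  ⟨G.E.erase e, G.ends⟩

/-- Restriction of `G` to the edge set `X`. -/
def restrict (G : MGraph V α) (X : Finset α) : MGraph V α :=
  ⟨G.E ∩ X, G.ends⟩

/-- Contraction of the link `e` with endpoints `u, v`: the edge `e` is deleted
and the vertex `v` is identified with `u`. -/
def contractLink (G : MGraph V α) (e : α) (u v : V) : MGraph V α :=
  ⟨G.E.erase e, fun f => (G.ends f).map (fun w => if w = v then u else w)⟩

/-- `X` is a circuit of the contraction `M/e`, where `M` is the matroid with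
circuit collection `Circ`: the circuits of `M/e` are the minimal nonempty sets of
the form `C \ {e}` with `C` a circuit of `M`. -/
def ContractCircuit (Circ : Finset α → Prop) (e : α) (X : Finset α) : Prop :=
  (X.Nonempty ∧ ∃ C : Finset α, Circ C ∧ X = C.erase e) ∧
    ∀ Y ⊂ X, ¬ (Y.Nonempty ∧ ∃ C : Finset α, Circ C ∧ Y = C.erase e)

/-- `e` and `f` form a series pair: no cycle contains exactly one of them. -/
def SeriesPair (G : MGraph V α) (e f : α) : Prop :=
  e ∈ G.E ∧ f ∈ G.E ∧ ∀ C : Finset α, G.IsCycle C → (e ∈ C ↔ f ∈ C)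

/-- `X` is a series class of `G`: a maximal set of pairwise series edges. -/
def SeriesClass (G : MGraph V α) (X : Finset α) : Prop :=
  X ⊆ G.E ∧ X.Nonempty ∧ (∀ e ∈ X, ∀ f ∈ X, G.SeriesPair e f) ∧
    ∀ g ∈ G.E, (∀ e ∈ X, G.SeriesPair e g) → g ∈ X

/-- `G` is cosimple: no cut-edges and no nontrivial series classes. -/
def CoSimple (G : MGraph V α) : Prop :=
  (∀ e ∈ G.E, ¬ G.IsCutEdge e) ∧
    ∀ e ∈ G.E, ∀ f ∈ G.E, e ≠ f → ¬ G.SeriesPair e f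

/-- `e` and `f` are parallel edges. -/
def Parallel (G : MGraph V α) (e f : α) : Prop :=
  e ≠ f ∧ G.IsCycle {e, f}

/-- `P` is a parallel class of `G`: a maximal set of pairwise parallel non-loop
edges. -/
def ParallelClass (G : MGraph V α) (P : Finset α) : Prop :=
  P ⊆ G.E ∧ P.Nonempty ∧ (∀ e ∈ P, ¬ (G.ends e).IsDiag) ∧
    (∀ e ∈ P, ∀ f ∈ P, e ≠ f → G.Parallel e f) ∧
    ∀ g ∈ G.E, g ∉ P → ¬ (G.ends g).IsDiag → ∃ e ∈ P, ¬ G.Parallel e g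

/-- `P` is the edge set of a path of `G`: nonempty, acyclic, connected, with all
degrees at most two. -/
def IsPath (G : MGraph V α) (P : Finset α) : Prop :=
  P.Nonempty ∧ P ⊆ G.E ∧ (∀ C ⊆ P, ¬ G.IsCycle C) ∧
    (∀ v, G.VIn P v → G.degIn P v ≤ 2) ∧
    ∀ u v, G.VIn P u → G.VIn P v → Relation.ReflTransGen (G.Adj P) u v

/-- `P` is the edge set of a path of `G` with end-vertices `x` and `y`. -/
def PathBetween (G : MGraph V α) (P : Finset α) (x y : V) : Prop :=
  G.IsPath P ∧ x ≠ y ∧ G.degIn P x = 1 ∧ G.degIn P y = 1 ∧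
    ∀ v, G.degIn P v = 1 → v = x ∨ v = y

/-- `P` is the edge set of an ear of `G`: a path contained in a cycle, whose
internal vertices have degree two in `G` and whose end-vertices have degree at
least three in `G`. -/
def IsEar (G : MGraph V α) (P : Finset α) : Prop :=
  G.IsPath P ∧ (∀ v, G.degIn P v = 2 → G.degIn G.E v = 2) ∧
    (∀ v, G.degIn P v = 1 → 3 ≤ G.degIn G.E v) ∧
    ∃ C : Finset α, G.IsCycle C ∧ P ⊆ C

/-- `G` is a subdivision of `K_2^n`: two distinct branch vertices joined by `n`
internally disjoint paths whose edge sets partition `E(G)`. -/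
def IsK2nSub (G : MGraph V α) (n : ℕ) : Prop :=
  ∃ x y : V, x ≠ y ∧ ∃ P : Fin n → Finset α,
    (G.E = Finset.univ.biUnion fun i => P i) ∧
    (∀ i j : Fin n, i ≠ j → Disjoint (P i) (P j)) ∧
    (∀ i : Fin n, G.PathBetween (P i) x y) ∧
    (∀ i j : Fin n, i ≠ j → ∀ v, G.VIn (P i) v → G.VIn (P j) v → v = x ∨ v = y)

/-- `G` is a subdivision of `K_2^n` with the edge `e` lying on one of the `n`
paths. -/
def IsK2nSubThrough (G : MGraph V α) (n : ℕ) (e : α) : Prop :=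
  ∃ x y : V, x ≠ y ∧ ∃ P : Fin n → Finset α,
    (G.E = Finset.univ.biUnion fun i => P i) ∧
    (∀ i j : Fin n, i ≠ j → Disjoint (P i) (P j)) ∧
    (∀ i : Fin n, G.PathBetween (P i) x y) ∧
    (∀ i j : Fin n, i ≠ j → ∀ v, G.VIn (P i) v → G.VIn (P j) v → v = x ∨ v = y) ∧
    ∃ i : Fin n, e ∈ P i

/-- `T` is the edge set of a spanning tree of `G`. -/
def IsSpanningTree (G : MGraph V α) (T : Finset α) : Prop :=
  T ⊆ G.E ∧ (∀ C ⊆ T, ¬ G.IsCycle C) ∧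
    ∀ u v : V, Relation.ReflTransGen (G.Adj T) u v

end MGraph
set_option linter.unusedSectionVars false

namespace MGraphAux

open MGraph Finset

variable {V α : Type} [DecidableEq V] [DecidableEq α]

lemma sym2_exists (s : Sym2 V) : ∃ u v : V, s = s(u, v) := by
  induction s using Sym2.ind with
  | _ u v => exact ⟨u, v, rfl⟩

lemma sym2_eq_of_mem {s : Sym2 V} {u v : V} (huv : u ≠ v) (hu : u ∈ s) (hv : v ∈ s) :
    s = s(u, v) :=
  (Sym2.mem_and_mem_iff huv).mp ⟨hu, hv⟩

lemma ends_ne_diag (G : MGraph V α) (hl : G.Loopless) {e : α} (he : e ∈ G.E) {w : V} :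
    G.ends e ≠ s(w, w) := by
  intro h
  exact hl e he (h ▸ Sym2.mk_isDiag_iff.mpr rfl)

/-- The degree summand for a non-loop edge incident to `w` is 1. -/
lemma deg_term_mem (G : MGraph V α) (hl : G.Loopless) {e : α} (he : e ∈ G.E) {w : V}
    (hw : w ∈ G.ends e) :
    (if G.ends e = s(w, w) then 2 else if w ∈ G.ends e then 1 else 0) = 1 := by
  rw [if_neg (ends_ne_diag G hl he), if_pos hw]

lemma deg_term_not_mem (G : MGraph V α) {e : α} {w : V} (hw : w ∉ G.ends e) :
    (if G.ends e = s(w, w) then 2 else if w ∈ G.ends e then 1 else 0) = 0 := by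
  have : G.ends e ≠ s(w, w) := by
    intro h; exact hw (h ▸ Sym2.mem_mk_left w w)
  rw [if_neg this, if_neg hw]

/-- L2: two distinct parallel non-loop edges form a cycle. -/
lemma pair_isCycle (G : MGraph V α) (hl : G.Loopless) {e f : α} (he : e ∈ G.E) (hf : f ∈ G.E)
    (hef : e ≠ f) (hends : G.ends e = G.ends f) : G.IsCycle {e, f} := by
  obtain ⟨u, v, huv⟩ := sym2_exists (G.ends e)
  have hne : u ≠ v := by
    intro h; exact hl e he (by rw [huv, h]; exact Sym2.mk_isDiag_iff.mpr rfl)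
  have hsub : ({e, f} : Finset α) ⊆ G.E := by
    intro x hx; rcases Finset.mem_insert.mp hx with rfl | hx
    · exact he
    · rcases Finset.mem_singleton.mp hx with rfl; exact hf
  have hmemw : ∀ w, G.VIn {e, f} w → w = u ∨ w = v := by
    intro w ⟨g, hg, hwg⟩
    have hgend : G.ends g = s(u, v) := by
      rcases Finset.mem_insert.mp hg with rfl | hg
      · exact huv
      · rcases Finset.mem_singleton.mp hg with rfl; exact hends ▸ huv
    exact Sym2.mem_iff.mp (hgend ▸ hwg)
  have hadj : G.Adj {e, f} u v := ⟨e, Finset.mem_insert_self e _, huv⟩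
  have hadj' : G.Adj {e, f} v u := ⟨e, Finset.mem_insert_self e _, huv.trans (Sym2.eq_swap)⟩
  refine ⟨⟨e, Finset.mem_insert_self e _⟩, hsub, ?_, ?_⟩
  · intro w hw
    have hmem : ∀ g ∈ ({e, f} : Finset α), w ∈ G.ends g := by
      intro g hg
      have hgend : G.ends g = s(u, v) := by
        rcases Finset.mem_insert.mp hg with rfl | hg
        · exact huv
        · rcases Finset.mem_singleton.mp hg with rfl; exact hends ▸ huv
      rw [hgend]
      rcases hmemw w hw with rfl | rfl
      · exact Sym2.mem_mk_left _ _
      · exact Sym2.mem_mk_right _ _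
    unfold MGraph.degIn
    rw [Finset.sum_pair hef,
      deg_term_mem G hl he (hmem e (Finset.mem_insert_self e _)),
      deg_term_mem G hl hf (hmem f (by simp))]
  · intro w w' hw hw'
    rcases hmemw w hw with rfl | rfl <;> rcases hmemw w' hw' with rfl | rfl
    · exact Relation.ReflTransGen.refl
    · exact Relation.ReflTransGen.single hadj
    · exact Relation.ReflTransGen.single hadj'
    · exact Relation.ReflTransGen.refl

/-- L0: in a loopless graph every cycle has at least two edges. -/
lemma cycle_two_le_card (G : MGraph V α) (hl : G.Loopless) {C : Finset α} (hC : G.IsCycle C) :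
    2 ≤ C.card := by
  obtain ⟨⟨e, he⟩, hsub, hdeg, -⟩ := hC
  by_contra h
  push_neg at h
  have hcard : C.card = 1 := le_antisymm (by omega) (Finset.card_pos.mpr ⟨e, he⟩)
  obtain ⟨e', hC1⟩ := Finset.card_eq_one.mp hcard
  have heq : e = e' := by simpa [hC1] using he
  subst heq
  obtain ⟨u, v, huv⟩ := sym2_exists (G.ends e)
  have hu : u ∈ G.ends e := huv ▸ Sym2.mem_mk_left _ _
  have hd := hdeg u ⟨e, he, hu⟩
  rw [hC1] at hd
  unfold MGraph.degIn at hd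
  rw [Finset.sum_singleton, deg_term_mem G hl (hsub he) hu] at hd
  omega

/-- L3: in a loopless graph, a two-edge cycle consists of parallel edges. -/
lemma pair_cycle_ends (G : MGraph V α) (hl : G.Loopless) {e f : α} (hef : e ≠ f)
    (hC : G.IsCycle {e, f}) : G.ends e = G.ends f := by
  obtain ⟨-, hsub, hdeg, -⟩ := hC
  have he : e ∈ G.E := hsub (Finset.mem_insert_self e _)
  have hf : f ∈ G.E := hsub (by simp)
  obtain ⟨u, v, huv⟩ := sym2_exists (G.ends e)
  have hne : u ≠ v := by
    intro h; exact hl e he (by rw [huv, h]; exact Sym2.mk_isDiag_iff.mpr rfl)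
  have key : ∀ w, w ∈ G.ends e → w ∈ G.ends f := by
    intro w hw
    have hd := hdeg w ⟨e, Finset.mem_insert_self e _, hw⟩
    unfold MGraph.degIn at hd
    rw [Finset.sum_pair hef, deg_term_mem G hl he hw] at hd
    by_contra hwf
    rw [deg_term_not_mem G hwf] at hd
    omega
  rw [huv]
  exact (sym2_eq_of_mem hne (key u (huv ▸ Sym2.mem_mk_left _ _))
    (key v (huv ▸ Sym2.mem_mk_right _ _))).symm

end MGraphAux

namespace MGraphAux

open MGraph Finset

variable {V α : Type} [DecidableEq V] [DecidableEq α]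

/-- L4: in a loopless graph, no 3-edge cycle contains a parallel pair. -/
lemma no_triangle_with_pair (G : MGraph V α) (hl : G.Loopless) {e f g : α}
    (hef : e ≠ f) (heg : e ≠ g) (hfg : f ≠ g) (hends : G.ends e = G.ends f) :
    ¬ G.IsCycle {e, f, g} := by
  rintro ⟨-, hsub, hdeg, hconn⟩
  have he : e ∈ G.E := hsub (by simp)
  have hf : f ∈ G.E := hsub (by simp)
  have hg : g ∈ G.E := hsub (by simp)
  obtain ⟨u, v, huv⟩ := sym2_exists (G.ends e)
  have hne : u ≠ v := by
    intro h; exact hl e he (by rw [huv, h]; exact Sym2.mk_isDiag_iff.mpr rfl)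
  have hsum : ∀ w, w ∈ G.ends e →
      (if G.ends g = s(w, w) then 2 else if w ∈ G.ends g then 1 else 0) = 0 := by
    intro w hw
    have hd := hdeg w ⟨e, by simp, hw⟩
    unfold MGraph.degIn at hd
    rw [Finset.sum_insert (by simp [hef, heg]), Finset.sum_insert (by simp [hfg]),
      Finset.sum_singleton, deg_term_mem G hl he hw, deg_term_mem G hl hf (hends ▸ hw)] at hd
    omega
  have hnotg : ∀ w, w ∈ G.ends e → w ∉ G.ends g := by
    intro w hw hwg
    have := hsum w hw
    rw [deg_term_mem G hl hg hwg] at this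
    omega
  obtain ⟨p, q, hpq⟩ := sym2_exists (G.ends g)
  have hp : p ∈ G.ends g := hpq ▸ Sym2.mem_mk_left _ _
  -- reachable set from u is contained in the ends of e
  have invar : ∀ w, Relation.ReflTransGen (G.Adj {e, f, g}) u w → w ∈ G.ends e := by
    intro w h
    induction h with
    | refl => exact huv ▸ Sym2.mem_mk_left _ _
    | @tail b c hb hbc ih =>
      obtain ⟨h', hh', hhe⟩ := hbc
      have hc : c ∈ G.ends h' := hhe ▸ Sym2.mem_mk_right _ _
      have hbm : b ∈ G.ends h' := hhe ▸ Sym2.mem_mk_left _ _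
      rcases Finset.mem_insert.mp hh' with rfl | hh'
      · exact hc
      rcases Finset.mem_insert.mp hh' with rfl | hh'
      · exact hends ▸ hc
      · rcases Finset.mem_singleton.mp hh' with rfl
        exact absurd hbm (hnotg _ ih)
  have hreach := hconn u p ⟨e, by simp, huv ▸ Sym2.mem_mk_left _ _⟩ ⟨g, by simp, hp⟩
  exact hnotg p (invar p hreach) hp

/-- L5: three mutually parallel edges form a lift circuit. -/
lemma triple_liftCircuit (G : MGraph V α) (hl : G.Loopless) {e f g : α}
    (he : e ∈ G.E) (hf : f ∈ G.E) (hg : g ∈ G.E)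
    (hef : e ≠ f) (heg : e ≠ g) (hfg : f ≠ g)
    (h1 : G.ends e = G.ends f) (h2 : G.ends e = G.ends g) :
    G.LiftCircuit {e, f, g} := by
  refine ⟨?_, ⟨{e, f}, {e, g}, pair_isCycle G hl he hf hef h1,
    pair_isCycle G hl he hg heg h2, ?_, ?_, ?_⟩, ?_⟩
  · intro x hx
    rcases Finset.mem_insert.mp hx with rfl | hx
    · exact he
    rcases Finset.mem_insert.mp hx with rfl | hx
    · exact hf
    · rcases Finset.mem_singleton.mp hx with rfl; exact hg
  · intro x hx; rcases Finset.mem_insert.mp hx with rfl | hx; · simp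
    rcases Finset.mem_singleton.mp hx with rfl; simp
  · intro x hx; rcases Finset.mem_insert.mp hx with rfl | hx; · simp
    rcases Finset.mem_singleton.mp hx with rfl; simp
  · intro hcon
    have : f ∈ ({e, g} : Finset α) := by rw [← hcon]; simp
    rcases Finset.mem_insert.mp this with rfl | h
    · exact hef rfl
    · exact hfg (Finset.mem_singleton.mp h)
  · rintro Y hY ⟨C₁, C₂, hC₁, hC₂, hC₁Y, hC₂Y, hne⟩
    have hYcard : Y.card ≤ 2 := by
      have hlt := Finset.card_lt_card hY
      have h3 : ({e, f, g} : Finset α).card ≤ 3 := by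
        calc ({e, f, g} : Finset α).card ≤ ({f, g} : Finset α).card + 1 :=
              Finset.card_insert_le _ _
          _ ≤ (({g} : Finset α).card + 1) + 1 := by
              have := Finset.card_insert_le f ({g} : Finset α); omega
          _ = 3 := by simp
      omega
    have h1 := cycle_two_le_card G hl hC₁
    have h2 := cycle_two_le_card G hl hC₂
    have e1 : C₁ = Y := Finset.eq_of_subset_of_card_le hC₁Y
      (le_trans hYcard (by omega))
    have e2 : C₂ = Y := Finset.eq_of_subset_of_card_le hC₂Y
      (le_trans hYcard (by omega))
    exact hne (e1.trans e2.symm)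

/-- Classification of cycles inside a 3-element set. -/
lemma cycle_in_triple (G : MGraph V α) (hl : G.Loopless) {e f g : α} {C : Finset α}
    (hef : e ≠ f) (heg : e ≠ g) (hfg : f ≠ g)
    (hC : G.IsCycle C) (hsub : C ⊆ ({e, f, g} : Finset α)) :
    C = {e, f} ∨ C = {e, g} ∨ C = {f, g} ∨ C = {e, f, g} := by
  have hcard2 := cycle_two_le_card G hl hC
  have hcard3 : ({e, f, g} : Finset α).card = 3 := by
    rw [Finset.card_insert_of_notMem (by simp [hef, heg]),
      Finset.card_insert_of_notMem (by simp [hfg]), Finset.card_singleton]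
  have hle : C.card ≤ 3 := hcard3 ▸ Finset.card_le_card hsub
  interval_cases h : C.card
  · obtain ⟨a, b, hab, rfl⟩ := Finset.card_eq_two.mp h
    have ha := hsub (Finset.mem_insert_self a _)
    have hb : b ∈ ({e, f, g} : Finset α) := hsub (by simp)
    simp only [Finset.mem_insert, Finset.mem_singleton] at ha hb
    rcases ha with rfl | rfl | rfl <;> rcases hb with rfl | rfl | rfl <;>
      first
      | exact absurd rfl hab
      | (left; rfl)
      | (left; exact Finset.pair_comm _ _)
      | (right; left; rfl)
      | (right; left; exact Finset.pair_comm _ _)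
      | (right; right; left; rfl)
      | (right; right; left; exact Finset.pair_comm _ _)
  · right; right; right
    exact Finset.eq_of_subset_of_card_le hsub (by omega)

/-- L6: a 3-element lift circuit in a loopless graph consists of mutually
parallel edges. -/
lemma parallel_of_triple_circuit (G : MGraph V α) (hl : G.Loopless) {e f g : α}
    (hef : e ≠ f) (heg : e ≠ g) (hfg : f ≠ g)
    (hC : G.LiftCircuit {e, f, g}) :
    G.ends e = G.ends f ∧ G.ends e = G.ends g := by
  obtain ⟨-, ⟨C₁, C₂, hC₁, hC₂, hC₁X, hC₂X, hne⟩, -⟩ := hC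
  have perm1 : ({e, f, g} : Finset α) = {e, g, f} := by ext x; simp; tauto
  have perm2 : ({e, f, g} : Finset α) = {f, g, e} := by ext x; simp; tauto
  have cl₁ := cycle_in_triple G hl hef heg hfg hC₁ hC₁X
  have cl₂ := cycle_in_triple G hl hef heg hfg hC₂ hC₂X
  -- a full-triangle cycle together with any pair cycle is impossible
  have notfull : ¬ G.IsCycle {e, f, g} ∨
      (G.ends e ≠ G.ends f ∧ G.ends e ≠ G.ends g ∧ G.ends f ≠ G.ends g) := by
    by_cases hT : G.IsCycle {e, f, g}
    · right
      refine ⟨?_, ?_, ?_⟩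
      · exact fun h => no_triangle_with_pair G hl hef heg hfg h hT
      · exact fun h => no_triangle_with_pair G hl heg hef (Ne.symm hfg) h (perm1 ▸ hT)
      · exact fun h => no_triangle_with_pair G hl hfg (Ne.symm hef) (Ne.symm heg) h (perm2 ▸ hT)
    · left; exact hT
  have pair_ends : ∀ D : Finset α, G.IsCycle D →
      (D = {e, f} → G.ends e = G.ends f) ∧ (D = {e, g} → G.ends e = G.ends g) ∧
      (D = {f, g} → G.ends f = G.ends g) := by
    intro D hD
    exact ⟨fun h => pair_cycle_ends G hl hef (h ▸ hD),
      fun h => pair_cycle_ends G hl heg (h ▸ hD),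
      fun h => pair_cycle_ends G hl hfg (h ▸ hD)⟩
  obtain ⟨p11, p12, p13⟩ := pair_ends C₁ hC₁
  obtain ⟨p21, p22, p23⟩ := pair_ends C₂ hC₂
  have nofull₁ : C₁ = {e, f, g} → False := by
    rintro rfl
    rcases notfull with h | ⟨h1, h2, h3⟩
    · exact h hC₁
    · rcases cl₂ with h₂ | h₂ | h₂ | h₂
      · exact h1 (p21 h₂)
      · exact h2 (p22 h₂)
      · exact h3 (p23 h₂)
      · exact hne h₂.symm
  have nofull₂ : C₂ = {e, f, g} → False := by
    rintro rfl
    rcases notfull with h | ⟨h1, h2, h3⟩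
    · exact h hC₂
    · rcases cl₁ with h₁ | h₁ | h₁ | h₁
      · exact h1 (p11 h₁)
      · exact h2 (p12 h₁)
      · exact h3 (p13 h₁)
      · exact hne h₁
  rcases cl₁ with h₁ | h₁ | h₁ | h₁ <;> rcases cl₂ with h₂ | h₂ | h₂ | h₂
  · exact absurd (h₁.trans h₂.symm) hne
  · exact ⟨p11 h₁, p22 h₂⟩
  · exact ⟨p11 h₁, (p11 h₁).trans (p23 h₂)⟩
  · exact absurd h₂ (fun h => nofull₂ h)
  · exact ⟨p21 h₂, p12 h₁⟩
  · exact absurd (h₁.trans h₂.symm) hne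
  · exact ⟨(p12 h₁).trans (p23 h₂).symm, p12 h₁⟩
  · exact absurd h₂ (fun h => nofull₂ h)
  · exact ⟨p21 h₂, (p21 h₂).trans (p13 h₁)⟩
  · exact ⟨(p22 h₂).trans (p13 h₁).symm, p22 h₂⟩
  · exact absurd (h₁.trans h₂.symm) hne
  · exact absurd h₂ (fun h => nofull₂ h)
  · exact absurd h₁ (fun h => nofull₁ h)
  · exact absurd h₁ (fun h => nofull₁ h)
  · exact absurd h₁ (fun h => nofull₁ h)
  · exact absurd (h₁.trans h₂.symm) hne

end MGraphAux

namespace MGraphAux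

open MGraph Finset

variable {V V₁ V₂ α : Type} [DecidableEq V] [DecidableEq V₁] [DecidableEq V₂] [DecidableEq α]

/-- L7: cycles transfer along a vertex bijection respecting edge ends. -/
lemma isCycle_map (G₁ : MGraph V₁ α) (G₂ : MGraph V₂ α) (σ : V₁ ≃ V₂)
    (hE : G₁.E = G₂.E) (hends : ∀ e ∈ G₁.E, G₂.ends e = Sym2.map σ (G₁.ends e))
    {X : Finset α} (h : G₁.IsCycle X) : G₂.IsCycle X := by
  obtain ⟨hXne, hXE, hdeg, hconn⟩ := h
  have hXE₂ : X ⊆ G₂.E := hE ▸ hXE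
  have hmem : ∀ e ∈ X, ∀ w : V₂, w ∈ G₂.ends e ↔ σ.symm w ∈ G₁.ends e := by
    intro e he w
    rw [hends e (hXE he), Sym2.mem_map]
    constructor
    · rintro ⟨b, hb, rfl⟩; simpa using hb
    · intro hb; exact ⟨σ.symm w, hb, σ.apply_symm_apply w⟩
  have hdiag : ∀ e ∈ X, ∀ w : V₂,
      (G₂.ends e = s(w, w) ↔ G₁.ends e = s(σ.symm w, σ.symm w)) := by
    intro e he w
    rw [hends e (hXE he)]
    constructor
    · intro h
      have := congrArg (Sym2.map σ.symm) h
      rw [Sym2.map_map, Sym2.map_pair_eq] at this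
      simpa using this
    · intro h; rw [h, Sym2.map_pair_eq]; simp
  have hVIn : ∀ w : V₂, G₂.VIn X w → G₁.VIn X (σ.symm w) := by
    rintro w ⟨e, he, hwe⟩
    exact ⟨e, he, (hmem e he w).mp hwe⟩
  have hadj : ∀ a b : V₁, G₁.Adj X a b → G₂.Adj X (σ a) (σ b) := by
    rintro a b ⟨e, he, hee⟩
    exact ⟨e, he, by rw [hends e (hXE he), hee, Sym2.map_pair_eq]⟩
  refine ⟨hXne, hXE₂, ?_, ?_⟩
  · intro w hw
    have hd := hdeg (σ.symm w) (hVIn w hw)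
    unfold MGraph.degIn at hd ⊢
    refine Eq.trans (Finset.sum_congr rfl ?_) hd
    intro e he
    by_cases h1 : G₂.ends e = s(w, w)
    · rw [if_pos h1, if_pos ((hdiag e he w).mp h1)]
    · rw [if_neg h1, if_neg (fun h => h1 ((hdiag e he w).mpr h))]
      by_cases h2 : w ∈ G₂.ends e
      · rw [if_pos h2, if_pos ((hmem e he w).mp h2)]
      · rw [if_neg h2, if_neg (fun h => h2 ((hmem e he w).mpr h))]
  · intro u v hu hv
    have := hconn (σ.symm u) (σ.symm v) (hVIn u hu) (hVIn v hv)
    have hlift := this.lift σ hadj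
    simpa [Function.onFun] using hlift

/-- L8: two distinct non-diagonal pairs on a 3-element vertex set share a vertex. -/
lemma sym2_pair_share [Fintype V] (hV : Fintype.card V = 3) {s t : Sym2 V}
    (hs : ¬ s.IsDiag) (ht : ¬ t.IsDiag) (hst : s ≠ t) :
    ∃ a b c : V, a ≠ b ∧ a ≠ c ∧ b ≠ c ∧ s = s(a, b) ∧ t = s(a, c) := by
  obtain ⟨u, v, rfl⟩ := sym2_exists s
  obtain ⟨p, q, rfl⟩ := sym2_exists t
  have huv : u ≠ v := fun h => hs (Sym2.mk_isDiag_iff.mpr h)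
  have hpq : p ≠ q := fun h => ht (Sym2.mk_isDiag_iff.mpr h)
  by_cases h1 : p = u
  · refine ⟨u, v, q, huv, fun h => hpq (h1.trans h), ?_, rfl, by rw [h1]⟩
    intro h; exact hst (by rw [h1, ← h])
  by_cases h2 : q = u
  · refine ⟨u, v, p, huv, fun h => h1 h.symm, ?_, rfl, by rw [h2]; exact Sym2.eq_swap⟩
    intro h; exact hst (by rw [← h, h2]; exact Sym2.eq_swap)
  by_cases h3 : p = v
  · refine ⟨v, u, q, Ne.symm huv, fun h => hpq (h3.trans h), ?_, Sym2.eq_swap,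
      by rw [h3]⟩
    intro h; exact hst (by rw [h3, ← h]; exact Sym2.eq_swap)
  by_cases h4 : q = v
  · refine ⟨v, u, p, Ne.symm huv, fun h => h3 h.symm, ?_, Sym2.eq_swap,
      by rw [h4]; exact Sym2.eq_swap⟩
    intro h; exact hst (by rw [← h, h4])
  · exfalso
    have hcard4 : ({u, v, p, q} : Finset V).card = 4 := by
      rw [Finset.card_insert_of_notMem (by simp [huv, Ne.symm h1, Ne.symm h2]),
        Finset.card_insert_of_notMem (by simp [Ne.symm h3, Ne.symm h4]),
        Finset.card_insert_of_notMem (by simp [hpq]), Finset.card_singleton]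
    have hle := Finset.card_le_univ ({u, v, p, q} : Finset V)
    rw [hcard4, hV] at hle
    omega

/-- L9: a 3-element type is exhausted by three distinct elements. -/
lemma three_elems [Fintype V] (hV : Fintype.card V = 3) {a b c : V}
    (hab : a ≠ b) (hac : a ≠ c) (hbc : b ≠ c) (v : V) : v = a ∨ v = b ∨ v = c := by
  have hcard : ({a, b, c} : Finset V).card = 3 := by
    rw [Finset.card_insert_of_notMem (by simp [hab, hac]),
      Finset.card_insert_of_notMem (by simp [hbc]), Finset.card_singleton]
  have : ({a, b, c} : Finset V) = Finset.univ :=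
    Finset.eq_univ_of_card _ (hcard.trans hV.symm)
  have hv : v ∈ ({a, b, c} : Finset V) := this ▸ Finset.mem_univ v
  simpa using hv

/-- L10: the third non-diagonal pair on three vertices. -/
lemma sym2_third [Fintype V] (hV : Fintype.card V = 3) {a b c : V}
    (hab : a ≠ b) (hac : a ≠ c) (hbc : b ≠ c) {s : Sym2 V} (hs : ¬ s.IsDiag)
    (h1 : s ≠ s(a, b)) (h2 : s ≠ s(a, c)) : s = s(b, c) := by
  obtain ⟨u, v, rfl⟩ := sym2_exists s
  have huv : u ≠ v := fun h => hs (Sym2.mk_isDiag_iff.mpr h)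
  rcases three_elems hV hab hac hbc u with rfl | rfl | rfl <;>
    rcases three_elems hV hab hac hbc v with rfl | rfl | rfl <;>
    simp only [ne_eq, Sym2.eq_iff, not_or] at h1 h2 ⊢ <;>
    tauto

end MGraphAux

namespace MGraphAux

open MGraph Finset

variable {V α : Type} [DecidableEq V] [DecidableEq α]

lemma exists_third {P : Finset α} (h : 3 ≤ P.card) (e f : α) :
    ∃ g ∈ P, g ≠ e ∧ g ≠ f := by
  have hsd : 1 ≤ (P \ {e, f}).card := by
    have h2 : ({e, f} : Finset α).card ≤ 2 := by
      apply le_trans (Finset.card_insert_le _ _); simp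
    have h3 := Finset.le_card_sdiff ({e, f} : Finset α) P
    omega
  obtain ⟨g, hg⟩ := Finset.card_pos.mp hsd
  simp only [Finset.mem_sdiff, Finset.mem_insert, Finset.mem_singleton, not_or] at hg
  exact ⟨g, hg.1, hg.2.1, hg.2.2⟩

lemma parallelClass_ends_const (G : MGraph V α) (hl : G.Loopless) {P : Finset α}
    (hP : G.ParallelClass P) {p p' : α} (hp : p ∈ P) (hp' : p' ∈ P) :
    G.ends p = G.ends p' := by
  by_cases h : p = p'
  · rw [h]
  · obtain ⟨hne, hcyc⟩ := hP.2.2.2.1 p hp p' hp' h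
    exact pair_cycle_ends G hl hne hcyc

lemma class_subset_of_ends_eq (G : MGraph V α) (hl : G.Loopless) {P Q : Finset α} {p q : α}
    (hP : G.ParallelClass P) (hQ : G.ParallelClass Q) (hp : p ∈ P) (hq : q ∈ Q)
    (h : G.ends p = G.ends q) : Q ⊆ P := by
  intro f hf
  by_contra hfP
  have hfe : G.ends f = G.ends p :=
    (parallelClass_ends_const G hl hQ hf hq).trans h.symm
  obtain ⟨e, heP, hnpar⟩ := hP.2.2.2.2 f (hQ.1 hf) hfP (hQ.2.2.1 f hf)
  have hef : e ≠ f := fun h' => hfP (h' ▸ heP)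
  have hee : G.ends e = G.ends f :=
    (parallelClass_ends_const G hl hP heP hp).trans hfe.symm
  exact hnpar ⟨hef, pair_isCycle G hl (hP.1 heP) (hQ.1 hf) hef hee⟩

lemma ends_ne_of_classes (G : MGraph V α) (hl : G.Loopless) {P Q : Finset α} {p q : α}
    (hP : G.ParallelClass P) (hQ : G.ParallelClass Q) (hPQ : P ≠ Q)
    (hp : p ∈ P) (hq : q ∈ Q) : G.ends p ≠ G.ends q := by
  intro h
  exact hPQ (Finset.Subset.antisymm
    (class_subset_of_ends_eq G hl hQ hP hq hp h.symm)
    (class_subset_of_ends_eq G hl hP hQ hp hq h))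

end MGraphAux

open MGraphAux in
/-- cosimple loopless 2-edge-connected graphs on three vertices
with `L(G₁) = L(G₂)`, at least two circuits, and two parallel classes of `G₁` of
size at least three, are 2-isomorphic. -/
theorem twoIso_three_vertices_two_big_parallel_classes
    {V₁ V₂ α : Type} [DecidableEq V₁] [DecidableEq V₂] [DecidableEq α]
    [Fintype V₁] [Fintype V₂]
    (G₁ : MGraph V₁ α) (G₂ : MGraph V₂ α)
    (hV₁ : Fintype.card V₁ = 3) (hV₂ : Fintype.card V₂ = 3)
    (hcs₁ : G₁.CoSimple) (hcs₂ : G₂.CoSimple)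
    (hl₁ : G₁.Loopless) (hl₂ : G₂.Loopless)
    (h2ec₁ : G₁.TwoEdgeConnected) (h2ec₂ : G₂.TwoEdgeConnected)
    (hL : G₁.LiftEq G₂) (h2 : G₁.TwoLiftCircuits)
    (hP : ∃ P₁ P₂ : Finset α, G₁.ParallelClass P₁ ∧ G₁.ParallelClass P₂ ∧
      P₁ ≠ P₂ ∧ 3 ≤ P₁.card ∧ 3 ≤ P₂.card) :
    G₁.TwoIso G₂ := by
  obtain ⟨P₁, P₂, hpc₁, hpc₂, hPne, hc₁, hc₂⟩ := hP
  obtain ⟨hE, hCirc⟩ := hL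
  have hP₁E : P₁ ⊆ G₁.E := hpc₁.1
  have hP₂E : P₂ ⊆ G₁.E := hpc₂.1
  -- pick base edges
  obtain ⟨e₀, he₀⟩ := hpc₁.2.1
  obtain ⟨f₀, hf₀⟩ := hpc₂.2.1
  have const₁ : ∀ p ∈ P₁, G₁.ends p = G₁.ends e₀ :=
    fun p hp => parallelClass_ends_const G₁ hl₁ hpc₁ hp he₀
  have const₂ : ∀ p ∈ P₂, G₁.ends p = G₁.ends f₀ :=
    fun p hp => parallelClass_ends_const G₁ hl₁ hpc₂ hp hf₀
  have cross_ne : G₁.ends e₀ ≠ G₁.ends f₀ :=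
    ends_ne_of_classes G₁ hl₁ hpc₁ hpc₂ hPne he₀ hf₀
  -- members of different classes are distinct edges
  have hmem_ne : ∀ p ∈ P₁, ∀ q ∈ P₂, p ≠ q := by
    intro p hp q hq h
    exact ends_ne_of_classes G₁ hl₁ hpc₁ hpc₂ hPne hp hq (h ▸ rfl)
  -- ends of G₂ are constant on P₁ and P₂
  have const₂₁ : ∀ p ∈ P₁, ∀ p' ∈ P₁, G₂.ends p = G₂.ends p' := by
    intro p hp p' hp'
    by_cases hpp : p = p'
    · rw [hpp]
    obtain ⟨g, hg, hge, hge'⟩ := exists_third hc₁ p p'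
    have lc₁ : G₁.LiftCircuit {p, p', g} :=
      triple_liftCircuit G₁ hl₁ (hP₁E hp) (hP₁E hp') (hP₁E hg) hpp (Ne.symm hge)
        (Ne.symm hge') ((const₁ p hp).trans (const₁ p' hp').symm)
        ((const₁ p hp).trans (const₁ g hg).symm)
    exact (parallel_of_triple_circuit G₂ hl₂ hpp (Ne.symm hge) (Ne.symm hge')
      ((hCirc _).mp lc₁)).1
  have const₂₂ : ∀ p ∈ P₂, ∀ p' ∈ P₂, G₂.ends p = G₂.ends p' := by
    intro p hp p' hp'
    by_cases hpp : p = p'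
    · rw [hpp]
    obtain ⟨g, hg, hge, hge'⟩ := exists_third hc₂ p p'
    have lc₁ : G₁.LiftCircuit {p, p', g} :=
      triple_liftCircuit G₁ hl₁ (hP₂E hp) (hP₂E hp') (hP₂E hg) hpp (Ne.symm hge)
        (Ne.symm hge') ((const₂ p hp).trans (const₂ p' hp').symm)
        ((const₂ p hp).trans (const₂ g hg).symm)
    exact (parallel_of_triple_circuit G₂ hl₂ hpp (Ne.symm hge) (Ne.symm hge')
      ((hCirc _).mp lc₁)).1
  -- the two classes have different ends in G₂ as well
  have cross_ne₂ : G₂.ends e₀ ≠ G₂.ends f₀ := by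
    intro h
    obtain ⟨e₁, he₁, hne01, -⟩ := exists_third hc₁ e₀ e₀
    have hfe₀ : e₀ ≠ f₀ := hmem_ne e₀ he₀ f₀ hf₀
    have hfe₁ : e₁ ≠ f₀ := hmem_ne e₁ he₁ f₀ hf₀
    have lc₂ : G₂.LiftCircuit {e₀, e₁, f₀} :=
      triple_liftCircuit G₂ hl₂ (hE ▸ hP₁E he₀) (hE ▸ hP₁E he₁) (hE ▸ hP₂E hf₀)
        (Ne.symm hne01) hfe₀ hfe₁ (const₂₁ e₀ he₀ e₁ he₁) h
    exact cross_ne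
      (parallel_of_triple_circuit G₁ hl₁ (Ne.symm hne01) hfe₀ hfe₁
        ((hCirc _).mpr lc₂)).2
  -- name the vertices
  obtain ⟨a, b, c, hab, hac, hbc, hσ₁, hσ₂⟩ :=
    sym2_pair_share hV₁ (hl₁ e₀ (hP₁E he₀)) (hl₁ f₀ (hP₂E hf₀)) cross_ne
  obtain ⟨x, y, z, hxy, hxz, hyz, hτ₁, hτ₂⟩ :=
    sym2_pair_share hV₂ (hl₂ e₀ (hE ▸ hP₁E he₀)) (hl₂ f₀ (hE ▸ hP₂E hf₀)) cross_ne₂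
  -- the vertex bijection
  set σf : V₁ → V₂ := fun v => if v = a then x else if v = b then y else z with hσf
  have hfa : σf a = x := by simp [hσf]
  have hfb : σf b = y := by simp [hσf, Ne.symm hab]
  have hfc : σf c = z := by simp [hσf, Ne.symm hac, Ne.symm hbc]
  have hinj : Function.Injective σf := by
    intro v w h
    rcases three_elems hV₁ hab hac hbc v with rfl | rfl | rfl <;>
      rcases three_elems hV₁ hab hac hbc w with rfl | rfl | rfl <;>
      simp only [hfa, hfb, hfc] at h <;>
      first
        | rfl
        | exact absurd h hxy
        | exact absurd h hxz
        | exact absurd h hyz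
        | exact absurd h.symm hxy
        | exact absurd h.symm hxz
        | exact absurd h.symm hyz
  have hbij : Function.Bijective σf :=
    (Fintype.bijective_iff_injective_and_card σf).mpr ⟨hinj, by rw [hV₁, hV₂]⟩
  set σ : V₁ ≃ V₂ := Equiv.ofBijective σf hbij with hσ
  have hcoe : ∀ v, σ v = σf v := fun v => rfl
  -- the key fact: ends correspond under σ
  have hends : ∀ e ∈ G₁.E, G₂.ends e = Sym2.map σ (G₁.ends e) := by
    intro e he
    by_cases h1 : e ∈ P₁
    · rw [(const₂₁ e h1 e₀ he₀).trans hτ₁, (const₁ e h1).trans hσ₁,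
        Sym2.map_pair_eq, hcoe, hcoe, hfa, hfb]
    by_cases h2 : e ∈ P₂
    · rw [(const₂₂ e h2 f₀ hf₀).trans hτ₂, (const₂ e h2).trans hσ₂,
        Sym2.map_pair_eq, hcoe, hcoe, hfa, hfc]
    -- e is in the "third" class
    have nondiag₁ : ¬ (G₁.ends e).IsDiag := hl₁ e he
    have hne1 : G₁.ends e ≠ s(a, b) := by
      intro h
      obtain ⟨p, hp, hnpar⟩ := hpc₁.2.2.2.2 e he h1 nondiag₁
      have hpe : p ≠ e := fun h' => h1 (h' ▸ hp)
      exact hnpar ⟨hpe, pair_isCycle G₁ hl₁ (hP₁E hp) he hpe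
        (((const₁ p hp).trans hσ₁).trans h.symm)⟩
    have hne2 : G₁.ends e ≠ s(a, c) := by
      intro h
      obtain ⟨p, hp, hnpar⟩ := hpc₂.2.2.2.2 e he h2 nondiag₁
      have hpe : p ≠ e := fun h' => h2 (h' ▸ hp)
      exact hnpar ⟨hpe, pair_isCycle G₁ hl₁ (hP₂E hp) he hpe
        (((const₂ p hp).trans hσ₂).trans h.symm)⟩
    have hbc' : G₁.ends e = s(b, c) := sym2_third hV₁ hab hac hbc nondiag₁ hne1 hne2
    have nondiag₂ : ¬ (G₂.ends e).IsDiag := hl₂ e (hE ▸ he)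
    have τne1 : G₂.ends e ≠ s(x, y) := by
      intro h
      obtain ⟨e₁, he₁, hne01, -⟩ := exists_third hc₁ e₀ e₀
      have h0e : e₀ ≠ e := fun h' => h1 (h' ▸ he₀)
      have h1e : e₁ ≠ e := fun h' => h1 (h' ▸ he₁)
      have lc₂ : G₂.LiftCircuit {e₀, e₁, e} :=
        triple_liftCircuit G₂ hl₂ (hE ▸ hP₁E he₀) (hE ▸ hP₁E he₁) (hE ▸ he)
          (Ne.symm hne01) h0e h1e (const₂₁ e₀ he₀ e₁ he₁) (hτ₁.trans h.symm)
      have := (parallel_of_triple_circuit G₁ hl₁ (Ne.symm hne01) h0e h1e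
        ((hCirc _).mpr lc₂)).2
      exact hne1 ((hσ₁.symm.trans this).symm)
    have τne2 : G₂.ends e ≠ s(x, z) := by
      intro h
      obtain ⟨f₁, hf₁, hne01, -⟩ := exists_third hc₂ f₀ f₀
      have h0e : f₀ ≠ e := fun h' => h2 (h' ▸ hf₀)
      have h1e : f₁ ≠ e := fun h' => h2 (h' ▸ hf₁)
      have lc₂ : G₂.LiftCircuit {f₀, f₁, e} :=
        triple_liftCircuit G₂ hl₂ (hE ▸ hP₂E hf₀) (hE ▸ hP₂E hf₁) (hE ▸ he)
          (Ne.symm hne01) h0e h1e (const₂₂ f₀ hf₀ f₁ hf₁) (hτ₂.trans h.symm)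
      have := (parallel_of_triple_circuit G₁ hl₁ (Ne.symm hne01) h0e h1e
        ((hCirc _).mpr lc₂)).2
      exact hne2 ((hσ₂.symm.trans this).symm)
    have hyz' : G₂.ends e = s(y, z) := sym2_third hV₂ hxy hxz hyz nondiag₂ τne1 τne2
    rw [hyz', hbc', Sym2.map_pair_eq, hcoe, hcoe, hfb, hfc]
  have hends' : ∀ e ∈ G₂.E, G₁.ends e = Sym2.map σ.symm (G₂.ends e) := by
    intro e he
    rw [hends e (hE ▸ he), Sym2.map_map]
    simp
  exact ⟨hE, fun X => ⟨fun h => isCycle_map G₁ G₂ σ hE hends h,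
    fun h => isCycle_map G₂ G₁ σ.symm hE.symm hends' h⟩⟩
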